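/- Let f : ℝ → ℂ be continuous with compact support. For ε > 0 define f_ε(z) = (1/(ε√π)) ∫_ℝ f(x) e^{-(x-z)²/ε²} dx for z ∈ ℂ. Then each f_ε is an entire function, and f_ε → f uniformly on ℝ as ε → 0. -/

import Mathlib

open MeasureTheory Topology Filter

-- differentiability of the convolution integral
lemma gc_diff (f : ℝ → ℂ) (hf : Continuous f) (hsupp : HasCompactSupport f)
    {ε : ℝ} (hε : 0 < ε) :
    Differentiable ℂ (fun z : ℂ => ∫ x : ℝ, f x * Complex.exp (-((x : ℂ) - z) ^ 2 / (ε : ℂ) ^ 2)) := by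
  intro z₀
  set F' : ℂ → ℝ → ℂ := fun z a =>
    f a * (Complex.exp (-((a : ℂ) - z) ^ 2 / (ε : ℂ) ^ 2) * (2 * ((a : ℂ) - z) / (ε : ℂ) ^ 2)) with hF'
  have hd : ∀ (a : ℝ) (z : ℂ),
      HasDerivAt (fun z : ℂ => f a * Complex.exp (-((a : ℂ) - z) ^ 2 / (ε : ℂ) ^ 2)) (F' z a) z := by
    intro a z
    have h0 : HasDerivAt (fun z : ℂ => ((a : ℂ) - z)) (-1) z := (hasDerivAt_id z).const_sub _
    have h1 : HasDerivAt (fun z : ℂ => -((a : ℂ) - z) ^ 2 / (ε : ℂ) ^ 2)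
        (2 * ((a : ℂ) - z) / (ε : ℂ) ^ 2) z := by
      have := ((h0.pow 2).neg).div_const ((ε : ℂ) ^ 2)
      refine this.congr_deriv ?_
      norm_num
    exact h1.cexp.const_mul (f a)
  -- bound
  have hcmp : IsCompact ((tsupport f) ×ˢ Metric.closedBall z₀ 1) :=
    hsupp.prod (isCompact_closedBall _ _)
  have hcont : Continuous (fun p : ℝ × ℂ =>
      f p.1 * (Complex.exp (-((p.1 : ℂ) - p.2) ^ 2 / (ε : ℂ) ^ 2) *
        (2 * ((p.1 : ℂ) - p.2) / (ε : ℂ) ^ 2))) := by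
    fun_prop
  obtain ⟨C, hC⟩ := hcmp.exists_bound_of_continuousOn hcont.continuousOn
  have h := hasDerivAt_integral_of_dominated_loc_of_deriv_le (μ := volume) (x₀ := z₀)
    (F := fun z a => f a * Complex.exp (-((a : ℂ) - z) ^ 2 / (ε : ℂ) ^ 2)) (F' := F')
    (bound := (tsupport f).indicator fun _ => C) (Metric.ball_mem_nhds z₀ one_pos)
    (Filter.Eventually.of_forall fun z => (by fun_prop : Continuous fun a : ℝ =>
      f a * Complex.exp (-((a : ℂ) - z) ^ 2 / (ε : ℂ) ^ 2)).aestronglyMeasurable)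
    (((by fun_prop : Continuous fun a : ℝ =>
      f a * Complex.exp (-((a : ℂ) - z₀) ^ 2 / (ε : ℂ) ^ 2))).integrable_of_hasCompactSupport
      (hsupp.mul_right))
    ((by fun_prop : Continuous (F' z₀)).aestronglyMeasurable)
    (Filter.Eventually.of_forall ?_) ?_ (Filter.Eventually.of_forall fun a z hz => hd a z)
  · exact h.2.differentiableAt
  · intro a z hz
    by_cases ha : a ∈ tsupport f
    · rw [Set.indicator_of_mem ha]
      exact hC (a, z) ⟨ha, Metric.ball_subset_closedBall hz⟩
    · rw [Set.indicator_of_notMem ha, hF']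
      simp [image_eq_zero_of_notMem_tsupport ha]
  · exact (IntegrableOn.integrable_indicator
      (integrableOn_const hsupp.measure_lt_top.ne)
      (isClosed_tsupport f).measurableSet)


lemma gc_gauss_int : ∫ u : ℝ, Real.exp (-u ^ 2) = Real.sqrt Real.pi := by
  simpa using integral_gaussian 1

lemma gc_int1 (f : ℝ → ℂ) (hf : Continuous f) (hsupp : HasCompactSupport f)
    (ε x : ℝ) :
    Integrable (fun u : ℝ => f (x + ε * u) * (Real.exp (-u ^ 2) : ℂ)) := by
  obtain ⟨M, hM⟩ := hf.bounded_above_of_compact_support hsupp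
  refine Integrable.bdd_mul ?_
    (hf.comp (by fun_prop : Continuous fun u : ℝ => x + ε * u)).aestronglyMeasurable
    (Filter.Eventually.of_forall fun u => hM _)
  exact ((by simpa using integrable_exp_neg_mul_sq one_pos :
    Integrable fun u : ℝ => Real.exp (-u ^ 2))).ofReal (𝕜 := ℂ)

lemma gc_key (f : ℝ → ℂ) (hf : Continuous f) (hsupp : HasCompactSupport f)
    {ε : ℝ} (hε : 0 < ε) (x : ℝ) :
    ((1 / (ε * Real.sqrt Real.pi) : ℝ) : ℂ) *
        (∫ y : ℝ, f y * Complex.exp (-((y : ℂ) - (x : ℂ)) ^ 2 / (ε : ℂ) ^ 2)) - f x =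
      (((Real.sqrt Real.pi)⁻¹ : ℝ) : ℂ) *
        ∫ u : ℝ, (f (x + ε * u) - f x) * (Real.exp (-u ^ 2) : ℂ) := by
  have sπ : 0 < Real.sqrt Real.pi := Real.sqrt_pos.2 Real.pi_pos
  set g : ℝ → ℂ := fun y => f y * (Real.exp (-((y - x) / ε) ^ 2) : ℂ) with hg
  have e1 : ∀ y : ℝ, f y * Complex.exp (-((y : ℂ) - (x : ℂ)) ^ 2 / (ε : ℂ) ^ 2) = g y := by
    intro y
    rw [hg]
    congr 1
    rw [Complex.ofReal_exp]
    congr 1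
    have hεc : (ε : ℂ) ≠ 0 := Complex.ofReal_ne_zero.2 hε.ne'
    push_cast
    field_simp
  have e3 : ∀ u : ℝ, g (x + ε * u) = f (x + ε * u) * (Real.exp (-u ^ 2) : ℂ) := by
    intro u
    rw [hg]
    have : (x + ε * u - x) / ε = u := by field_simp; ring
    simp only [this]
  have e2 : ∫ y, g y = ε • ∫ u : ℝ, g (x + ε * u) := by
    have h1 : (∫ u : ℝ, g (x + ε * u)) = |ε⁻¹| • ∫ t : ℝ, g (x + t) :=
      MeasureTheory.Measure.integral_comp_mul_left (fun t => g (x + t)) ε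
    have h2 : (∫ t : ℝ, g (x + t)) = ∫ y, g y := integral_add_left_eq_self g x
    rw [h1, h2, smul_smul, abs_of_pos (inv_pos.2 hε), mul_inv_cancel₀ hε.ne', one_smul]
  have int1 := gc_int1 f hf hsupp ε x
  have int2 : Integrable (fun u : ℝ => f x * (Real.exp (-u ^ 2) : ℂ)) := by
    exact (((by simpa using integrable_exp_neg_mul_sq one_pos :
      Integrable fun u : ℝ => Real.exp (-u ^ 2))).ofReal (𝕜 := ℂ)).const_mul (f x)
  have e4 : (f x : ℂ) = (((Real.sqrt Real.pi)⁻¹ : ℝ) : ℂ) *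
      ∫ u : ℝ, f x * (Real.exp (-u ^ 2) : ℂ) := by
    rw [integral_const_mul]
    have hI : (∫ u : ℝ, ((Real.exp (-u ^ 2) : ℝ) : ℂ)) = ((Real.sqrt Real.pi : ℝ) : ℂ) := by
      rw [← gc_gauss_int]; exact integral_ofReal
    rw [hI]
    have hne : ((Real.sqrt Real.pi : ℝ) : ℂ) ≠ 0 := Complex.ofReal_ne_zero.2 sπ.ne'
    push_cast
    field_simp
  calc ((1 / (ε * Real.sqrt Real.pi) : ℝ) : ℂ) *
        (∫ y : ℝ, f y * Complex.exp (-((y : ℂ) - (x : ℂ)) ^ 2 / (ε : ℂ) ^ 2)) - f x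
      = ((1 / (ε * Real.sqrt Real.pi) : ℝ) : ℂ) * (ε • ∫ u : ℝ, g (x + ε * u)) - f x := by
        rw [← e2]; congr 2; exact integral_congr_ae (Filter.Eventually.of_forall e1)
    _ = (((Real.sqrt Real.pi)⁻¹ : ℝ) : ℂ) *
          (∫ u : ℝ, f (x + ε * u) * (Real.exp (-u ^ 2) : ℂ)) - f x := by
        have hc : ((1 / (ε * Real.sqrt Real.pi) : ℝ) : ℂ) * (ε : ℂ) =
            (((Real.sqrt Real.pi)⁻¹ : ℝ) : ℂ) := by
          have h1 : (ε : ℂ) ≠ 0 := Complex.ofReal_ne_zero.2 hε.ne'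
          have h2 : ((Real.sqrt Real.pi : ℝ) : ℂ) ≠ 0 := Complex.ofReal_ne_zero.2 sπ.ne'
          push_cast
          field_simp
        simp_rw [e3]
        rw [Complex.real_smul, ← mul_assoc, hc]
    _ = (((Real.sqrt Real.pi)⁻¹ : ℝ) : ℂ) *
          ((∫ u : ℝ, f (x + ε * u) * (Real.exp (-u ^ 2) : ℂ)) -
            ∫ u : ℝ, f x * (Real.exp (-u ^ 2) : ℂ)) := by
        rw [mul_sub, ← e4]
    _ = (((Real.sqrt Real.pi)⁻¹ : ℝ) : ℂ) *
          ∫ u : ℝ, (f (x + ε * u) - f x) * (Real.exp (-u ^ 2) : ℂ) := by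
        rw [← integral_sub int1 int2]
        simp_rw [sub_mul]

theorem gc_unif (f : ℝ → ℂ) (hf : Continuous f) (hsupp : HasCompactSupport f)
    (F : ℝ → ℂ → ℂ)
    (hF : ∀ ε : ℝ, 0 < ε → ∀ z : ℂ,
      F ε z = ((1 / (ε * Real.sqrt Real.pi) : ℝ) : ℂ) *
        ∫ x : ℝ, f x * Complex.exp (-((x : ℂ) - z) ^ 2 / (ε : ℂ) ^ 2))
    (key : ∀ {ε : ℝ}, 0 < ε → ∀ x : ℝ,
      ((1 / (ε * Real.sqrt Real.pi) : ℝ) : ℂ) *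
        (∫ y : ℝ, f y * Complex.exp (-((y : ℂ) - (x : ℂ)) ^ 2 / (ε : ℂ) ^ 2)) - f x =
      (((Real.sqrt Real.pi)⁻¹ : ℝ) : ℂ) *
        ∫ u : ℝ, (f (x + ε * u) - f x) * (Real.exp (-u ^ 2) : ℂ))
    (int1 : ∀ (ε x : ℝ), Integrable (fun u : ℝ => f (x + ε * u) * (Real.exp (-u ^ 2) : ℂ))) :
    TendstoUniformly (fun ε : ℝ => fun x : ℝ => F ε (x : ℂ)) f
      (nhdsWithin 0 (Set.Ioi 0)) := by
  rw [Metric.tendstoUniformly_iff]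
  intro η hη
  have sπ : 0 < Real.sqrt Real.pi := Real.sqrt_pos.2 Real.pi_pos
  obtain ⟨M, hM⟩ := hf.bounded_above_of_compact_support hsupp
  have hM0 : 0 ≤ M := le_trans (norm_nonneg _) (hM 0)
  have hgauss : Integrable (fun u : ℝ => Real.exp (-u ^ 2)) := by
    simpa using integrable_exp_neg_mul_sq one_pos
  have hgtot : ∫ u : ℝ, Real.exp (-u ^ 2) = Real.sqrt Real.pi := by
    simpa using integral_gaussian 1
  set ν : ℝ := η * Real.sqrt Real.pi / (4 * (2 * M + 1)) with hνdef
  have hν0 : 0 < ν := by positivity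
  -- choose a cutoff
  have htend : Filter.Tendsto (fun n : ℕ => ∫ u in (-(n : ℝ))..(n : ℝ), Real.exp (-u ^ 2))
      Filter.atTop (𝓝 (∫ u : ℝ, Real.exp (-u ^ 2))) :=
    intervalIntegral_tendsto_integral hgauss
      (Filter.tendsto_neg_atTop_atBot.comp tendsto_natCast_atTop_atTop)
      tendsto_natCast_atTop_atTop
  obtain ⟨n, hd, hn1⟩ := ((Metric.tendsto_nhds.mp htend ν hν0).and
    (Filter.eventually_ge_atTop 1)).exists
  set R : ℝ := (n : ℝ) with hRdef
  have hR1 : (1 : ℝ) ≤ R := Nat.one_le_cast.mpr hn1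
  have hR0 : 0 < R := lt_of_lt_of_le one_pos hR1
  set s : Set ℝ := Set.Ioc (-R) R with hsdef
  have hs : MeasurableSet s := measurableSet_Ioc
  have hseq : ∫ u in s, Real.exp (-u ^ 2) = ∫ u in (-R)..R, Real.exp (-u ^ 2) :=
    (intervalIntegral.integral_of_le (by linarith)).symm
  have htail : ∫ u in sᶜ, Real.exp (-u ^ 2) ≤ ν := by
    have hsplit := integral_add_compl hs hgauss (f := fun u : ℝ => Real.exp (-u ^ 2))
    have h1 : ∫ u in sᶜ, Real.exp (-u ^ 2) =
        (∫ u : ℝ, Real.exp (-u ^ 2)) - ∫ u in s, Real.exp (-u ^ 2) := by linarith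
    rw [h1]
    have h2 := hd
    rw [Real.dist_eq] at h2
    rw [hseq]
    have := abs_lt.1 h2
    linarith [this.1, this.2]
  -- uniform continuity
  obtain ⟨δ, hδ0, hδ⟩ := Metric.uniformContinuous_iff.1
    (hsupp.uniformContinuous_of_continuous hf) (η / 4) (by positivity)
  filter_upwards [Ioo_mem_nhdsGT_of_mem
    (show (0 : ℝ) ∈ Set.Ico 0 (δ / R) from ⟨le_refl _, by positivity⟩)] with ε hεm
  obtain ⟨hε0, hεR⟩ := hεm
  intro x
  rw [dist_comm, dist_eq_norm, hF ε hε0, key hε0 x]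
  set φ : ℝ → ℝ := fun u => ‖f (x + ε * u) - f x‖ * Real.exp (-u ^ 2) with hφdef
  have hint1 := int1 ε x
  have hint2 : Integrable (fun u : ℝ => f x * (Real.exp (-u ^ 2) : ℂ)) :=
    (hgauss.ofReal (𝕜 := ℂ)).const_mul (f x)
  have hψ : Integrable (fun u : ℝ => (f (x + ε * u) - f x) * (Real.exp (-u ^ 2) : ℂ)) :=
    (hint1.sub hint2).congr (Filter.Eventually.of_forall fun u => (sub_mul _ _ _).symm)
  have hnormeq : ∀ u : ℝ, ‖(f (x + ε * u) - f x) * ((Real.exp (-u ^ 2) : ℝ) : ℂ)‖ = φ u := by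
    intro u
    rw [norm_mul, hφdef]
    congr 1
    rw [Complex.norm_real, Real.norm_eq_abs, abs_of_pos (Real.exp_pos _)]
  have hφ : Integrable φ :=
    hψ.norm.congr (Filter.Eventually.of_forall fun u => hnormeq u)
  have hφnn : ∀ u, 0 ≤ φ u := fun u => mul_nonneg (norm_nonneg _) (Real.exp_pos _).le
  have hnorm : ‖∫ u : ℝ, (f (x + ε * u) - f x) * (Real.exp (-u ^ 2) : ℂ)‖ ≤ ∫ u, φ u := by
    refine (norm_integral_le_integral_norm _).trans_eq ?_
    exact integral_congr_ae (Filter.Eventually.of_forall fun u => hnormeq u)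
  have hsplitφ : ∫ u, φ u = (∫ u in s, φ u) + ∫ u in sᶜ, φ u :=
    (integral_add_compl hs hφ).symm
  have hbound_s : ∫ u in s, φ u ≤ η / 4 * Real.sqrt Real.pi := by
    have h1 : ∫ u in s, φ u ≤ ∫ u in s, η / 4 * Real.exp (-u ^ 2) := by
      refine setIntegral_mono_on hφ.integrableOn (hgauss.const_mul _).integrableOn hs ?_
      intro u hu
      have hud : |u| ≤ R := abs_le.2 ⟨by linarith [hu.1], hu.2⟩
      have hdist : dist (x + ε * u) x < δ := by
        rw [Real.dist_eq]
        have : x + ε * u - x = ε * u := by ring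
        rw [this, abs_mul, abs_of_pos hε0]
        calc ε * |u| ≤ ε * R := mul_le_mul_of_nonneg_left hud hε0.le
          _ < δ / R * R := mul_lt_mul_of_pos_right hεR hR0
          _ = δ := div_mul_cancel₀ _ hR0.ne'
      have := hδ hdist
      rw [dist_eq_norm] at this
      exact mul_le_mul_of_nonneg_right this.le (Real.exp_pos _).le
    rw [integral_const_mul] at h1
    refine h1.trans ?_
    refine mul_le_mul_of_nonneg_left ?_ (by positivity)
    rw [← hgtot]
    exact setIntegral_le_integral hgauss
      (Filter.Eventually.of_forall fun u => (Real.exp_pos _).le)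
  have hbound_c : ∫ u in sᶜ, φ u ≤ η / 4 * Real.sqrt Real.pi := by
    have h1 : ∫ u in sᶜ, φ u ≤ ∫ u in sᶜ, 2 * M * Real.exp (-u ^ 2) := by
      refine setIntegral_mono_on hφ.integrableOn (hgauss.const_mul _).integrableOn
        hs.compl ?_
      intro u _
      refine mul_le_mul_of_nonneg_right ?_ (Real.exp_pos _).le
      calc ‖f (x + ε * u) - f x‖ ≤ ‖f (x + ε * u)‖ + ‖f x‖ := norm_sub_le _ _
        _ ≤ M + M := add_le_add (hM _) (hM _)
        _ = 2 * M := by ring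
    rw [integral_const_mul] at h1
    refine h1.trans ?_
    have h2 : 2 * M * ∫ u in sᶜ, Real.exp (-u ^ 2) ≤ 2 * M * ν :=
      mul_le_mul_of_nonneg_left htail (by positivity)
    refine h2.trans ?_
    have : 2 * M * ν ≤ (2 * M + 1) * ν := by nlinarith
    refine this.trans ?_
    rw [hνdef]
    rw [show (2 * M + 1) * (η * Real.sqrt Real.pi / (4 * (2 * M + 1))) =
      η / 4 * Real.sqrt Real.pi from by field_simp]
  -- final computation
  have hInorm : ‖(((Real.sqrt Real.pi)⁻¹ : ℝ) : ℂ) *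
      ∫ u : ℝ, (f (x + ε * u) - f x) * (Real.exp (-u ^ 2) : ℂ)‖ ≤
      (Real.sqrt Real.pi)⁻¹ * (η / 4 * Real.sqrt Real.pi + η / 4 * Real.sqrt Real.pi) := by
    rw [norm_mul]
    have hc : ‖(((Real.sqrt Real.pi)⁻¹ : ℝ) : ℂ)‖ = (Real.sqrt Real.pi)⁻¹ := by
      rw [Complex.norm_real, Real.norm_eq_abs, abs_of_pos (inv_pos.2 sπ)]
    rw [hc]
    refine mul_le_mul_of_nonneg_left ?_ (inv_pos.2 sπ).le
    refine hnorm.trans ?_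
    rw [hsplitφ]
    exact add_le_add hbound_s hbound_c
  refine lt_of_le_of_lt hInorm ?_
  rw [show (Real.sqrt Real.pi)⁻¹ * (η / 4 * Real.sqrt Real.pi + η / 4 * Real.sqrt Real.pi) =
    η / 2 from by field_simp; ring]
  linarith

/-- Gaussian convolution: the family `f_ε` consists of entire functions converging
uniformly to `f` on `ℝ` as `ε → 0⁺`. -/
theorem gaussian_convolution_approx (f : ℝ → ℂ) (hf : Continuous f)
    (hsupp : HasCompactSupport f) (F : ℝ → ℂ → ℂ)
    (hF : ∀ ε : ℝ, 0 < ε → ∀ z : ℂ,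
      F ε z = ((1 / (ε * Real.sqrt Real.pi) : ℝ) : ℂ) *
        ∫ x : ℝ, f x * Complex.exp (-((x : ℂ) - z) ^ 2 / (ε : ℂ) ^ 2)) :
    (∀ ε : ℝ, 0 < ε → Differentiable ℂ (F ε)) ∧
      TendstoUniformly (fun ε : ℝ => fun x : ℝ => F ε (x : ℂ)) f
        (nhdsWithin 0 (Set.Ioi 0)) := by
  constructor
  · intro ε hε
    have heq : F ε = fun z => ((1 / (ε * Real.sqrt Real.pi) : ℝ) : ℂ) *
        ∫ x : ℝ, f x * Complex.exp (-((x : ℂ) - z) ^ 2 / (ε : ℂ) ^ 2) := funext (hF ε hε)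
    rw [heq]
    exact (gc_diff f hf hsupp hε).const_mul _
  · exact gc_unif f hf hsupp F hF (fun {ε} hε x => gc_key f hf hsupp hε x)
      (fun ε x => gc_int1 f hf hsupp ε x)
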